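/- arXiv:1505.03604 — 4 statements merged into one kernel-verified Lean document; each statement's English description precedes it below -/
import Mathlib

section
/- Let H be a real Hilbert space and D a dictionary in H. There is an absolute constant c > 0 such that for every f ∈ A_1(D) and every m ≥ 1, the best m-term approximation error satisfies σ_m(f, D) := inf_{g ∈ Σ_m(D)} ‖f − g‖ ≤ c · |f|_{A_1(D)} · m^{−1/2}. -/
open scoped BigOperators

universe u

/-- A dictionary in a normed space: a set of norm-one elements with dense linear span. -/
def IsDictionary (H : Type u) [NormedAddCommGroup H] [NormedSpace ℝ H] (D : Set H) : Prop :=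
  (∀ φ ∈ D, ‖φ‖ = 1) ∧ Dense (Submodule.span ℝ D : Set H)

/-- Finite linear combinations of dictionary elements with coefficients of total
absolute sum at most `M`. -/
def A1Pre (H : Type u) [NormedAddCommGroup H] [NormedSpace ℝ H] (D : Set H) (M : ℝ) : Set H :=
  {g | ∃ (n : ℕ) (c : Fin n → ℝ) (φ : Fin n → H),
    (∀ i, φ i ∈ D) ∧ (∑ i, |c i|) ≤ M ∧ g = ∑ i, c i • φ i}

/-- The class `A₁(D, M)`: the closure of `A1Pre`. -/
def A1 (H : Type u) [NormedAddCommGroup H] [NormedSpace ℝ H] (D : Set H) (M : ℝ) : Set H :=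
  closure (A1Pre H D M)

/-- The class `A₁(D)`: the union of the classes `A₁(D, M)` over all `M > 0`. -/
def A1Class (H : Type u) [NormedAddCommGroup H] [NormedSpace ℝ H] (D : Set H) : Set H :=
  ⋃ M ∈ Set.Ioi (0 : ℝ), A1 H D M

/-- The "semi-norm" `|f|_{A₁(D)} = inf {M : f ∈ A₁(D, M)}`. -/
noncomputable def A1Norm (H : Type u) [NormedAddCommGroup H] [NormedSpace ℝ H]
    (D : Set H) (f : H) : ℝ :=
  sInf {M : ℝ | 0 < M ∧ f ∈ A1 H D M}

/-- The set `Σ_m(D)` of `m`-sparse elements with respect to the dictionary `D`. -/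
def SigmaSparse (H : Type u) [NormedAddCommGroup H] [NormedSpace ℝ H]
    (D : Set H) (m : ℕ) : Set H :=
  {g | ∃ (n : ℕ) (c : Fin n → ℝ) (φ : Fin n → H),
    n ≤ m ∧ (∀ i, φ i ∈ D) ∧ g = ∑ i, c i • φ i}


lemma exists_index_le {n : ℕ} (p x : Fin n → ℝ) (hp : ∀ i, 0 ≤ p i)
    (hs : ∑ i, p i = 1) {B : ℝ} (hB : ∑ i, p i * x i ≤ B) :
    ∃ i, x i ≤ B := by
  by_contra hcon
  push_neg at hcon
  obtain ⟨i₀, hi₀⟩ : ∃ i, 0 < p i := by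
    by_contra hc
    push_neg at hc
    have : ∑ i, p i = 0 := Finset.sum_eq_zero fun i _ => le_antisymm (hc i) (hp i)
    rw [hs] at this; norm_num at this
  have h1 : ∑ i, p i * B < ∑ i, p i * x i := by
    refine Finset.sum_lt_sum (fun i _ => mul_le_mul_of_nonneg_left (hcon i).le (hp i))
      ⟨i₀, Finset.mem_univ _, mul_lt_mul_of_pos_left (hcon i₀) hi₀⟩
  rw [← Finset.sum_mul, hs, one_mul] at h1
  linarith

lemma maurey_step {H : Type u} [NormedAddCommGroup H] [InnerProductSpace ℝ H]
    {n : ℕ} (p : Fin n → ℝ) (z : Fin n → H) (hp : ∀ i, 0 ≤ p i)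
    (hs : ∑ i, p i = 1) {A : ℝ} (hA : 0 ≤ A) (hz : ∀ i, ‖z i‖ ≤ A)
    (w : H) : ∃ i : Fin n, ‖w + ((∑ j, p j • z j) - z i)‖ ^ 2 ≤ ‖w‖ ^ 2 + 4 * A ^ 2 := by
  set h : H := ∑ j, p j • z j with hh
  have hhnorm : ‖h‖ ≤ A := by
    calc ‖h‖ ≤ ∑ j, ‖p j • z j‖ := norm_sum_le _ _
    _ ≤ ∑ j, p j * A := by
        refine Finset.sum_le_sum fun j _ => ?_
        rw [norm_smul, Real.norm_eq_abs, abs_of_nonneg (hp j)]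
        exact mul_le_mul_of_nonneg_left (hz j) (hp j)
    _ = A := by rw [← Finset.sum_mul, hs, one_mul]
  have hzero : ∑ i, p i • (h - z i) = 0 := by
    simp only [smul_sub]
    rw [Finset.sum_sub_distrib, ← Finset.sum_smul, hs, one_smul, hh, sub_self]
  apply exists_index_le p _ hp hs
  have expand : ∀ i, ‖w + (h - z i)‖ ^ 2
      = ‖w‖ ^ 2 + 2 * (inner ℝ w (h - z i) : ℝ) + ‖h - z i‖ ^ 2 := fun i =>
    norm_add_sq_real w (h - z i)
  calc ∑ i, p i * ‖w + (h - z i)‖ ^ 2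
      = ∑ i, (p i * ‖w‖ ^ 2 + 2 * (inner ℝ w (p i • (h - z i)) : ℝ) + p i * ‖h - z i‖ ^ 2) := by
        refine Finset.sum_congr rfl fun i _ => ?_
        rw [expand i, real_inner_smul_right]; ring
    _ = ‖w‖ ^ 2 + 2 * (inner ℝ w (∑ i, p i • (h - z i)) : ℝ) + ∑ i, p i * ‖h - z i‖ ^ 2 := by
        rw [Finset.sum_add_distrib, Finset.sum_add_distrib, ← Finset.sum_mul, hs, one_mul,
          ← Finset.mul_sum, ← inner_sum]
    _ = ‖w‖ ^ 2 + ∑ i, p i * ‖h - z i‖ ^ 2 := by rw [hzero, inner_zero_right]; ring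
    _ ≤ ‖w‖ ^ 2 + 4 * A ^ 2 := by
        have : ∑ i, p i * ‖h - z i‖ ^ 2 ≤ ∑ i, p i * (4 * A ^ 2) := by
          refine Finset.sum_le_sum fun i _ => mul_le_mul_of_nonneg_left ?_ (hp i)
          have h1 : ‖h - z i‖ ≤ 2 * A := by
            calc ‖h - z i‖ ≤ ‖h‖ + ‖z i‖ := norm_sub_le _ _
            _ ≤ 2 * A := by linarith [hz i]
          calc ‖h - z i‖ ^ 2 ≤ (2 * A) ^ 2 := by
                exact pow_le_pow_left₀ (norm_nonneg _) h1 2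
            _ = 4 * A ^ 2 := by ring
        rw [← Finset.sum_mul, hs, one_mul] at this
        linarith

lemma maurey {H : Type u} [NormedAddCommGroup H] [InnerProductSpace ℝ H]
    {n : ℕ} (p : Fin n → ℝ) (z : Fin n → H) (hp : ∀ i, 0 ≤ p i)
    (hs : ∑ i, p i = 1) {A : ℝ} (hA : 0 ≤ A) (hz : ∀ i, ‖z i‖ ≤ A) :
    ∀ m : ℕ, ∃ k : Fin m → Fin n,
      ‖(m : ℝ) • (∑ i, p i • z i) - ∑ j, z (k j)‖ ^ 2 ≤ 4 * A ^ 2 * m := by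
  intro m
  induction m with
  | zero => exact ⟨Fin.elim0, by simp⟩
  | succ m ih =>
    obtain ⟨k, hk⟩ := ih
    set h : H := ∑ i, p i • z i with hh
    obtain ⟨i, hi⟩ := maurey_step p z hp hs hA hz ((m : ℝ) • h - ∑ j, z (k j))
    set k' : Fin (m + 1) → Fin n := Fin.snoc k i with hk'
    refine ⟨k', ?_⟩
    have e1 : ((m + 1 : ℕ) : ℝ) • h - ∑ j : Fin (m + 1), z (k' j)
        = ((m : ℝ) • h - ∑ j, z (k j)) + (h - z i) := by
      rw [Fin.sum_univ_castSucc]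
      simp only [hk', Fin.snoc_castSucc, Fin.snoc_last]
      push_cast
      rw [add_smul, one_smul]
      abel
    rw [e1]
    rw [hh] at hi
    push_cast
    calc ‖((m : ℝ) • h - ∑ j, z (k j)) + (h - z i)‖ ^ 2
        ≤ ‖(m : ℝ) • h - ∑ j, z (k j)‖ ^ 2 + 4 * A ^ 2 := hi
      _ ≤ 4 * A ^ 2 * m + 4 * A ^ 2 := by linarith
      _ = 4 * A ^ 2 * ((m : ℝ) + 1) := by ring

lemma real_sign_mul_abs (x : ℝ) : Real.sign x * |x| = x := by
  rcases lt_trichotomy x 0 with h | h | h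
  · rw [Real.sign_of_neg h, abs_of_neg h]; ring
  · simp [h]
  · rw [Real.sign_of_pos h, abs_of_pos h]; ring

lemma abs_sign_le_one (x : ℝ) : |Real.sign x| ≤ 1 := by
  rcases lt_trichotomy x 0 with h | h | h
  · simp [Real.sign_of_neg h]
  · simp [h]
  · simp [Real.sign_of_pos h]

/-- There is an absolute constant `c > 0` such that for every real Hilbert space `H`,
every dictionary `D` in `H`, every `f ∈ A₁(D)` and every `m ≥ 1`,
`σ_m(f, D) ≤ c · |f|_{A₁(D)} · m^{-1/2}`. -/
theorem best_m_term_rate_on_A1 :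
    ∃ c : ℝ, 0 < c ∧
      ∀ (H : Type u) [NormedAddCommGroup H] [InnerProductSpace ℝ H] [CompleteSpace H]
        (D : Set H), IsDictionary H D →
        ∀ f ∈ A1Class H D, ∀ m : ℕ, 1 ≤ m →
          sInf {e : ℝ | ∃ g ∈ SigmaSparse H D m, e = ‖f - g‖} ≤
            c * A1Norm H D f * (m : ℝ) ^ (-(1 : ℝ) / 2) := by
  refine ⟨2, by norm_num, ?_⟩
  intro H _ _ _ D hD f hf m hm
  set N := A1Norm H D f with hN
  set r : ℝ := (m : ℝ) ^ (-(1 : ℝ) / 2) with hr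
  have hm1 : (1 : ℝ) ≤ (m : ℝ) := by exact_mod_cast hm
  have hmpos : (0 : ℝ) < (m : ℝ) := by linarith
  have hrpos : 0 < r := Real.rpow_pos_of_pos hmpos _
  have hr1 : r ≤ 1 := Real.rpow_le_one_of_one_le_of_nonpos hm1 (by norm_num)
  have hrsqrt : r = (Real.sqrt m)⁻¹ := by
    rw [hr, Real.sqrt_eq_rpow, neg_div, Real.rpow_neg hmpos.le]
  have hzero_mem : (0 : H) ∈ SigmaSparse H D m :=
    ⟨0, Fin.elim0, Fin.elim0, Nat.zero_le m, fun i => i.elim0, by simp⟩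
  have hbdd : BddBelow {e : ℝ | ∃ g ∈ SigmaSparse H D m, e = ‖f - g‖} := by
    refine ⟨0, ?_⟩
    rintro e ⟨g, -, rfl⟩
    positivity
  have hN0 : 0 ≤ N := Real.sInf_nonneg fun x hx => hx.1.le
  obtain ⟨M₀, hM₀, hfM₀⟩ : ∃ M₀, 0 < M₀ ∧ f ∈ A1 H D M₀ := by
    simpa [A1Class, Set.mem_iUnion] using hf
  rcases Set.eq_empty_or_nonempty D with hDe | ⟨φ₀, hφ₀⟩
  · -- degenerate case: empty dictionary, f = 0
    have hfz : f = 0 := by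
      have hsub : A1Pre H D M₀ ⊆ {0} := by
        rintro g ⟨n, c, φ, hφ, -, rfl⟩
        rcases Nat.eq_zero_or_pos n with rfl | hn
        · simp
        · exact absurd (hφ ⟨0, hn⟩) (by simp [hDe])
      have := closure_mono hsub hfM₀
      simpa using this
    have h0 : (0 : ℝ) ∈ {e : ℝ | ∃ g ∈ SigmaSparse H D m, e = ‖f - g‖} :=
      ⟨0, hzero_mem, by simp [hfz]⟩
    calc sInf {e : ℝ | ∃ g ∈ SigmaSparse H D m, e = ‖f - g‖} ≤ 0 := csInf_le hbdd h0
      _ ≤ 2 * N * r := by positivity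
  · -- main case
    refine le_of_forall_pos_le_add fun ε hε => ?_
    have hMex : {M : ℝ | 0 < M ∧ f ∈ A1 H D M}.Nonempty := ⟨M₀, hM₀, hfM₀⟩
    obtain ⟨M, hMmem, hMlt⟩ := Real.lt_sInf_add_pos hMex (show (0:ℝ) < ε / 4 by linarith)
    obtain ⟨hMpos, hfM⟩ := hMmem
    replace hMlt : M < N + ε / 4 := hMlt
    obtain ⟨g', hg'pre, hdist⟩ := Metric.mem_closure_iff.mp hfM (ε / 2) (by linarith)
    rw [dist_eq_norm] at hdist
    obtain ⟨n, c, φ, hφD, hcsum, hg'eq⟩ := hg'pre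
    have hSnn : 0 ≤ ∑ i, |c i| := Finset.sum_nonneg fun i _ => abs_nonneg _
    set p : Fin (n + 1) → ℝ := Fin.snoc (fun i => |c i| / M) (1 - (∑ i, |c i|) / M) with hp
    set a : Fin (n + 1) → ℝ := Fin.snoc (fun i => M * Real.sign (c i)) 0 with ha
    set ψ : Fin (n + 1) → H := Fin.snoc φ φ₀ with hψ
    set z : Fin (n + 1) → H := fun i => a i • ψ i with hz
    have hψD : ∀ i, ψ i ∈ D := by
      refine Fin.lastCases ?_ ?_ <;> simp [hψ, Fin.snoc_castSucc, Fin.snoc_last]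
      exacts [hφ₀, hφD]
    have hpnn : ∀ i, 0 ≤ p i := by
      refine Fin.lastCases ?_ ?_
      · simp only [hp, Fin.snoc_last, sub_nonneg]
        exact div_le_one_of_le₀ hcsum hMpos.le
      · intro i
        simp only [hp, Fin.snoc_castSucc]
        positivity
    have hpsum : ∑ i, p i = 1 := by
      rw [Fin.sum_univ_castSucc]
      simp only [hp, Fin.snoc_castSucc, Fin.snoc_last]
      rw [← Finset.sum_div]
      ring
    have habs : ∀ i, |a i| ≤ M := by
      refine Fin.lastCases ?_ ?_
      · simp [ha, hMpos.le]
      · intro i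
        simp only [ha, Fin.snoc_castSucc, abs_mul, abs_of_pos hMpos]
        calc M * |Real.sign (c i)| ≤ M * 1 :=
              mul_le_mul_of_nonneg_left (abs_sign_le_one _) hMpos.le
          _ = M := mul_one M
    have hznorm : ∀ i, ‖z i‖ ≤ M := by
      intro i
      have h1 : ‖z i‖ = |a i| * ‖ψ i‖ := by rw [hz, norm_smul, Real.norm_eq_abs]
      rw [h1, hD.1 _ (hψD i), mul_one]
      exact habs i
    have hsum_eq : ∑ i, p i • z i = g' := by
      rw [Fin.sum_univ_castSucc]
      simp only [hz, hp, ha, hψ, Fin.snoc_castSucc, Fin.snoc_last, zero_smul, smul_zero,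
        add_zero, smul_smul]
      rw [hg'eq]
      refine Finset.sum_congr rfl fun i _ => ?_
      congr 1
      rw [div_mul_eq_mul_div, mul_comm (|c i|), mul_assoc, real_sign_mul_abs]
      field_simp
    obtain ⟨k, hk⟩ := maurey p z hpnn hpsum hMpos.le hznorm m
    rw [hsum_eq] at hk
    set W : H := (m : ℝ) • g' - ∑ j, z (k j) with hW
    set gm : H := (m : ℝ)⁻¹ • ∑ j, z (k j) with hgm
    have hgm_mem : gm ∈ SigmaSparse H D m := by
      refine ⟨m, fun j => (m : ℝ)⁻¹ * a (k j), fun j => ψ (k j), le_refl m,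
        fun j => hψD _, ?_⟩
      rw [hgm, Finset.smul_sum]
      exact Finset.sum_congr rfl fun j _ => by rw [hz, smul_smul]
    have hWle : ‖W‖ ≤ 2 * M * Real.sqrt m := by
      have h1 : ‖W‖ = Real.sqrt (‖W‖ ^ 2) := (Real.sqrt_sq (norm_nonneg W)).symm
      have h2 : Real.sqrt (4 * M ^ 2 * (m : ℝ)) = 2 * M * Real.sqrt m := by
        rw [show 4 * M ^ 2 * (m : ℝ) = (2 * M) ^ 2 * m by ring,
          Real.sqrt_mul (by positivity), Real.sqrt_sq (by positivity)]
      rw [h1, ← h2]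
      exact Real.sqrt_le_sqrt hk
    have hdiff : g' - gm = (m : ℝ)⁻¹ • W := by
      rw [hW, hgm, smul_sub, smul_smul, inv_mul_cancel₀ hmpos.ne', one_smul]
    have hsq : Real.sqrt m * Real.sqrt m = (m : ℝ) := Real.mul_self_sqrt hmpos.le
    have hsqpos : 0 < Real.sqrt m := Real.sqrt_pos.mpr hmpos
    have hgmnorm : ‖g' - gm‖ ≤ 2 * M * r := by
      rw [hdiff, norm_smul, Real.norm_eq_abs, abs_of_pos (by positivity : (0:ℝ) < (m:ℝ)⁻¹)]
      calc (m : ℝ)⁻¹ * ‖W‖ ≤ (m : ℝ)⁻¹ * (2 * M * Real.sqrt m) :=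
            mul_le_mul_of_nonneg_left hWle (by positivity)
        _ = 2 * M * r := by
            rw [hrsqrt]
            field_simp
            linear_combination hsq
    have hfinal : ‖f - gm‖ ≤ 2 * N * r + ε := by
      calc ‖f - gm‖ ≤ ‖f - g'‖ + ‖g' - gm‖ := by
            have : f - gm = (f - g') + (g' - gm) := by abel
            rw [this]; exact norm_add_le _ _
        _ ≤ ε / 2 + 2 * M * r := by linarith
        _ ≤ 2 * N * r + ε := by nlinarith
    calc sInf {e : ℝ | ∃ g ∈ SigmaSparse H D m, e = ‖f - g‖}
        ≤ ‖f - gm‖ := csInf_le hbdd ⟨gm, hgm_mem, rfl⟩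
      _ ≤ 2 * N * r + ε := hfinal
end

section
/- Let ℓ > 0, r > 0, B > 0, and let {a_m}_{m=1}^∞ and {r_m}_{m=2}^∞ be sequences of non-negative real numbers satisfying a_1 ≤ B and a_{m+1} ≤ a_m (1 − (r_{m+1}/r) a_m^ℓ) for all m = 1, 2, .... Then for every m ≥ 2, a_m ≤ max{1, ℓ^{−1/ℓ}} · r^{1/ℓ} · ( r B^{−ℓ} + ∑_{k=2}^m r_k )^{−1/ℓ}. -/
open scoped BigOperators

lemma aux_one_sub_rpow (ℓ t : ℝ) (hℓ : 0 < ℓ) (ht0 : 0 ≤ t) (ht1 : t < 1) :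
    (1 - t) ^ ℓ * (1 + ℓ * t) ≤ 1 := by
  have h1 : (0:ℝ) < 1 - t := by linarith
  have h2 : (0:ℝ) < 1 + ℓ * t := by nlinarith
  have l1 : Real.log (1 - t) ≤ -t := by
    have := Real.log_le_sub_one_of_pos h1; linarith
  have l2 : Real.log (1 + ℓ * t) ≤ ℓ * t := by
    have := Real.log_le_sub_one_of_pos h2; linarith
  calc (1 - t) ^ ℓ * (1 + ℓ * t)
      = Real.exp (Real.log (1 - t) * ℓ) * Real.exp (Real.log (1 + ℓ * t)) := by
        rw [Real.rpow_def_of_pos h1, Real.exp_log h2]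
    _ = Real.exp (Real.log (1 - t) * ℓ + Real.log (1 + ℓ * t)) := (Real.exp_add _ _).symm
    _ ≤ Real.exp 0 := by
        apply Real.exp_le_exp.mpr
        nlinarith [mul_le_mul_of_nonneg_right l1 hℓ.le]
    _ = 1 := Real.exp_zero

set_option maxHeartbeats 1000000 in
/-- Let `ℓ > 0`, `r > 0`, `B > 0`, and let `{a_m}_{m≥1}` and `{r_m}_{m≥2}` be sequences of
non-negative numbers with `a₁ ≤ B` and `a_{m+1} ≤ a_m (1 − (r_{m+1}/r) a_m^ℓ)` for all `m ≥ 1`.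
Then for every `m ≥ 2`,
`a_m ≤ max{1, ℓ^{−1/ℓ}} · r^{1/ℓ} · (r B^{−ℓ} + ∑_{k=2}^m r_k)^{−1/ℓ}`. -/
theorem recursive_sequence_decay (ℓ r B : ℝ) (hℓ : 0 < ℓ) (hr : 0 < r) (hB : 0 < B)
    (a rs : ℕ → ℝ)
    (ha_nonneg : ∀ m : ℕ, 1 ≤ m → 0 ≤ a m)
    (hrs_nonneg : ∀ m : ℕ, 2 ≤ m → 0 ≤ rs m)
    (ha1 : a 1 ≤ B)
    (hrec : ∀ m : ℕ, 1 ≤ m → a (m + 1) ≤ a m * (1 - rs (m + 1) / r * a m ^ ℓ)) :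
    ∀ m : ℕ, 2 ≤ m →
      a m ≤ max 1 (ℓ ^ (-(1 : ℝ) / ℓ)) * r ^ ((1 : ℝ) / ℓ) *
        (r * B ^ (-ℓ) + ∑ k ∈ Finset.Icc 2 m, rs k) ^ (-(1 : ℝ) / ℓ) := by
  set M : ℝ := max 1 ℓ⁻¹ with hM
  have hM1 : (1:ℝ) ≤ M := le_max_left _ _
  have hMl : (1:ℝ) ≤ M * ℓ := by
    rcases le_total (1:ℝ) ℓ with h | h
    · nlinarith
    · have : ℓ⁻¹ ≤ M := le_max_right _ _
      calc (1:ℝ) = ℓ⁻¹ * ℓ := by field_simp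
        _ ≤ M * ℓ := by nlinarith
  have hBpos : (0:ℝ) < B ^ (-ℓ) := Real.rpow_pos_of_pos hB _
  have hSpos : ∀ m : ℕ, 0 < r * B ^ (-ℓ) + ∑ k ∈ Finset.Icc 2 m, rs k := by
    intro m
    have hsum : 0 ≤ ∑ k ∈ Finset.Icc 2 m, rs k :=
      Finset.sum_nonneg fun k hk => hrs_nonneg k (Finset.mem_Icc.mp hk).1
    positivity
  -- key induction
  have key : ∀ m : ℕ, 1 ≤ m →
      a m ^ ℓ * (r * B ^ (-ℓ) + ∑ k ∈ Finset.Icc 2 m, rs k) ≤ M * r := by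
    intro m hm
    induction m with
    | zero => omega
    | succ n ih =>
      rcases Nat.lt_or_ge n 1 with hn | hn
      · -- n = 0, base case m = 1
        interval_cases n
        have : Finset.Icc 2 1 = (∅ : Finset ℕ) := by decide
        rw [this]
        simp only [Finset.sum_empty, add_zero]
        have h1 : a 1 ^ ℓ ≤ B ^ ℓ := Real.rpow_le_rpow (ha_nonneg 1 le_rfl) ha1 hℓ.le
        have h2 : B ^ ℓ * B ^ (-ℓ) = 1 := by
          rw [← Real.rpow_add hB]; simp
        calc a 1 ^ ℓ * (r * B ^ (-ℓ)) ≤ B ^ ℓ * (r * B ^ (-ℓ)) := by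
              apply mul_le_mul_of_nonneg_right h1; positivity
          _ = r * (B ^ ℓ * B ^ (-ℓ)) := by ring
          _ = r := by rw [h2]; ring
          _ ≤ M * r := by nlinarith
      · -- inductive step, n ≥ 1
        have IH := ih hn
        have han : 0 ≤ a n := ha_nonneg n hn
        have hx : 0 ≤ a n ^ ℓ := Real.rpow_nonneg han _
        have hrsn : 0 ≤ rs (n + 1) := hrs_nonneg (n + 1) (by omega)
        set t : ℝ := rs (n + 1) / r * a n ^ ℓ with ht
        have ht0 : 0 ≤ t := by positivity
        have hrt : r * t = rs (n + 1) * a n ^ ℓ := by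
          rw [ht]; field_simp
        have hsum : (∑ k ∈ Finset.Icc 2 (n + 1), rs k)
            = (∑ k ∈ Finset.Icc 2 n, rs k) + rs (n + 1) := by
          rw [Finset.sum_Icc_succ_top (by omega : 2 ≤ n + 1)]
        have han1 : 0 ≤ a (n + 1) := ha_nonneg (n + 1) (by omega)
        rcases le_or_gt 1 t with hcase | hcase
        · -- then a (n+1) = 0
          have h0 : a (n + 1) ≤ 0 := by
            have := hrec n hn
            nlinarith
          have : a (n + 1) = 0 := le_antisymm h0 han1
          rw [this, Real.zero_rpow hℓ.ne', zero_mul]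
          nlinarith
        · -- t < 1
          have h1t : (0:ℝ) ≤ 1 - t := by linarith
          have hP : (1 - t) ^ ℓ * (1 + ℓ * t) ≤ 1 := aux_one_sub_rpow ℓ t hℓ ht0 hcase
          have hP0 : 0 ≤ (1 - t) ^ ℓ := Real.rpow_nonneg h1t _
          have hstep : a (n + 1) ^ ℓ ≤ a n ^ ℓ * (1 - t) ^ ℓ := by
            have h := hrec n hn
            calc a (n + 1) ^ ℓ ≤ (a n * (1 - t)) ^ ℓ :=
                  Real.rpow_le_rpow han1 h hℓ.le
              _ = a n ^ ℓ * (1 - t) ^ ℓ := Real.mul_rpow han h1t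
          rw [hsum]
          set S : ℝ := r * B ^ (-ℓ) + ∑ k ∈ Finset.Icc 2 n, rs k with hS
          have hSpos' : 0 < S := hSpos n
          have hgoal : a n ^ ℓ * (1 - t) ^ ℓ * (S + rs (n + 1)) ≤ M * r := by
            have e1 : a n ^ ℓ * (S + rs (n + 1)) = a n ^ ℓ * S + r * t := by
              rw [hrt]; ring
            nlinarith [mul_le_mul_of_nonneg_left IH hP0,
              mul_le_mul_of_nonneg_right hP (mul_pos (by nlinarith : (0:ℝ) < M) hr).le,
              mul_nonneg hP0 (mul_nonneg hr.le ht0),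
              mul_le_mul_of_nonneg_left (mul_le_mul_of_nonneg_right hMl (mul_nonneg hr.le ht0)) hP0]
          have hmono : a (n + 1) ^ ℓ * (r * B ^ (-ℓ) + ((∑ k ∈ Finset.Icc 2 n, rs k) + rs (n + 1)))
              ≤ a n ^ ℓ * (1 - t) ^ ℓ * (S + rs (n + 1)) := by
            have : (0:ℝ) ≤ S + rs (n + 1) := by positivity
            have := mul_le_mul_of_nonneg_right hstep this
            calc a (n + 1) ^ ℓ * (r * B ^ (-ℓ) + ((∑ k ∈ Finset.Icc 2 n, rs k) + rs (n + 1)))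
                = a (n + 1) ^ ℓ * (S + rs (n + 1)) := by rw [hS]; ring_nf
              _ ≤ a n ^ ℓ * (1 - t) ^ ℓ * (S + rs (n + 1)) := this
          linarith
  -- now conclude
  intro m hm
  have hm1 : 1 ≤ m := by omega
  have hS := hSpos m
  set S : ℝ := r * B ^ (-ℓ) + ∑ k ∈ Finset.Icc 2 m, rs k with hSdef
  have hkey := key m hm1
  have ham : 0 ≤ a m := ha_nonneg m hm1
  have h1 : a m ^ ℓ ≤ M * r * S⁻¹ := by
    rw [← div_eq_mul_inv]
    exact (le_div_iff₀ hS).mpr hkey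
  have hMpos : (0:ℝ) < M := lt_of_lt_of_le one_pos hM1
  have h2 : a m ≤ (M * r * S⁻¹) ^ ((1:ℝ)/ℓ) := by
    have h := Real.rpow_le_rpow (Real.rpow_nonneg ham ℓ) h1 (by positivity : (0:ℝ) ≤ 1/ℓ)
    rwa [← Real.rpow_mul ham, mul_one_div, div_self hℓ.ne', Real.rpow_one] at h
  have hsplit : (M * r * S⁻¹) ^ ((1:ℝ)/ℓ)
      = M ^ ((1:ℝ)/ℓ) * r ^ ((1:ℝ)/ℓ) * S ^ (-(1:ℝ)/ℓ) := by
    rw [Real.mul_rpow (by positivity) (by positivity),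
        Real.mul_rpow hMpos.le hr.le, Real.inv_rpow hS.le, ← Real.rpow_neg hS.le,
        neg_div]
  have hMfinal : M ^ ((1:ℝ)/ℓ) = max 1 (ℓ ^ (-(1:ℝ)/ℓ)) := by
    rcases le_total ℓ⁻¹ 1 with h | h
    · have hℓ1 : (1:ℝ) ≤ ℓ := by
        nlinarith [mul_pos hℓ (inv_pos.mpr hℓ), mul_inv_cancel₀ hℓ.ne']
      have e1 : M = 1 := max_eq_left h
      have hexp : (-(1:ℝ))/ℓ ≤ 0 :=
        div_nonpos_of_nonpos_of_nonneg (by norm_num) hℓ.le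
      have e2 : ℓ ^ (-(1:ℝ)/ℓ) ≤ 1 :=
        Real.rpow_le_one_of_one_le_of_nonpos hℓ1 hexp
      rw [e1, Real.one_rpow, max_eq_left e2]
    · have hℓ1 : ℓ ≤ 1 := by
        nlinarith [mul_inv_cancel₀ hℓ.ne']
      have e1 : M = ℓ⁻¹ := max_eq_right h
      have e2 : (1:ℝ) ≤ ℓ ^ (-((1:ℝ)/ℓ)) := by
        apply Real.one_le_rpow_of_pos_of_le_one_of_nonpos hℓ hℓ1
        have : (0:ℝ) < 1/ℓ := by positivity
        linarith
      rw [e1, Real.inv_rpow hℓ.le, ← Real.rpow_neg hℓ.le, neg_div, max_eq_right e2]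
  calc a m ≤ (M * r * S⁻¹) ^ ((1:ℝ)/ℓ) := h2
    _ = max 1 (ℓ ^ (-(1:ℝ)/ℓ)) * r ^ ((1:ℝ)/ℓ) * S ^ (-(1:ℝ)/ℓ) := by
        rw [hsplit, hMfinal]
end

section
/- Let X be a real Banach space whose modulus of smoothness satisfies ρ(u) ≤ γ u^q for all u > 0, where 1 < q ≤ 2 and γ > 0 is a constant. Let g ∈ X, g ≠ 0, and let F_g ∈ X* be a norming functional of g (i.e., ‖F_g‖ = 1 and F_g(g) = ‖g‖). Then for every h ∈ X and every u > 0, ‖g + u h‖ ≤ ‖g‖ + u F_g(h) + 2 γ u^q ‖g‖^{1−q} ‖h‖^q. -/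
/-- The modulus of smoothness of a real normed space `X`:
`ρ(u) = sup{(‖f + u g‖ + ‖f − u g‖)/2 − 1 : ‖f‖ = ‖g‖ = 1}`. -/
noncomputable def modulusOfSmoothness (X : Type*) [NormedAddCommGroup X] [NormedSpace ℝ X]
    (u : ℝ) : ℝ :=
  sSup {x : ℝ | ∃ f g : X, ‖f‖ = 1 ∧ ‖g‖ = 1 ∧ x = (‖f + u • g‖ + ‖f - u • g‖) / 2 - 1}

/-- Let `X` be a real Banach space with `ρ(u) ≤ γ u^q` for all `u > 0`, `1 < q ≤ 2`, `γ > 0`.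
If `g ≠ 0` and `F_g` is a norming functional of `g`, then for every `h ∈ X` and `u > 0`,
`‖g + u h‖ ≤ ‖g‖ + u F_g(h) + 2 γ u^q ‖g‖^{1−q} ‖h‖^q`. -/
theorem smoothness_norming_functional_bound {X : Type*} [NormedAddCommGroup X]
    [NormedSpace ℝ X] [CompleteSpace X]
    (γ q : ℝ) (hq1 : 1 < q) (hq2 : q ≤ 2) (hγ : 0 < γ)
    (hρ : ∀ u : ℝ, 0 < u → modulusOfSmoothness X u ≤ γ * u ^ q)
    (g : X) (hg : g ≠ 0)
    (Fg : X →L[ℝ] ℝ) (hFg_norm : ‖Fg‖ = 1) (hFg : Fg g = ‖g‖) :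
    ∀ h : X, ∀ u : ℝ, 0 < u →
      ‖g + u • h‖ ≤ ‖g‖ + u * Fg h + 2 * γ * u ^ q * ‖g‖ ^ (1 - q) * ‖h‖ ^ q := by
  intro h u hu
  by_cases hh : h = 0
  · subst hh
    have hq0 : q ≠ 0 := by linarith
    simp [Real.zero_rpow hq0]
  have hgn : 0 < ‖g‖ := norm_pos_iff.mpr hg
  have hhn : 0 < ‖h‖ := norm_pos_iff.mpr hh
  set t : ℝ := u * ‖h‖ / ‖g‖ with ht_def
  have ht : 0 < t := by positivity
  set f : X := ‖g‖⁻¹ • g with hf_def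
  set k : X := ‖h‖⁻¹ • h with hk_def
  have hf : ‖f‖ = 1 := by
    rw [hf_def, norm_smul, Real.norm_eq_abs, abs_of_pos (inv_pos.mpr hgn),
      inv_mul_cancel₀ hgn.ne']
  have hk : ‖k‖ = 1 := by
    rw [hk_def, norm_smul, Real.norm_eq_abs, abs_of_pos (inv_pos.mpr hhn),
      inv_mul_cancel₀ hhn.ne']
  have hbdd : BddAbove {x : ℝ | ∃ a b : X, ‖a‖ = 1 ∧ ‖b‖ = 1 ∧
      x = (‖a + t • b‖ + ‖a - t • b‖) / 2 - 1} := by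
    refine ⟨t, ?_⟩
    rintro x ⟨a, b, ha, hb, rfl⟩
    have h1 : ‖a + t • b‖ ≤ 1 + t := by
      calc ‖a + t • b‖ ≤ ‖a‖ + ‖t • b‖ := norm_add_le _ _
        _ = 1 + t := by
          rw [ha, norm_smul, hb, Real.norm_eq_abs, abs_of_pos ht, mul_one]
    have h2 : ‖a - t • b‖ ≤ 1 + t := by
      calc ‖a - t • b‖ ≤ ‖a‖ + ‖t • b‖ := norm_sub_le _ _
        _ = 1 + t := by
          rw [ha, norm_smul, hb, Real.norm_eq_abs, abs_of_pos ht, mul_one]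
    linarith
  have hmem : (‖f + t • k‖ + ‖f - t • k‖) / 2 - 1 ∈ {x : ℝ | ∃ a b : X, ‖a‖ = 1 ∧ ‖b‖ = 1 ∧
      x = (‖a + t • b‖ + ‖a - t • b‖) / 2 - 1} := ⟨f, k, hf, hk, rfl⟩
  have hle : (‖f + t • k‖ + ‖f - t • k‖) / 2 - 1 ≤ γ * t ^ q :=
    (le_csSup hbdd hmem).trans (hρ t ht)
  have hFgf : Fg f = 1 := by
    rw [hf_def, map_smul, smul_eq_mul, hFg, inv_mul_cancel₀ hgn.ne']
  have hFk : Fg (f - t • k) ≤ ‖f - t • k‖ := by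
    calc Fg (f - t • k) ≤ |Fg (f - t • k)| := le_abs_self _
      _ = ‖Fg (f - t • k)‖ := (Real.norm_eq_abs _).symm
      _ ≤ ‖Fg‖ * ‖f - t • k‖ := Fg.le_opNorm _
      _ = ‖f - t • k‖ := by rw [hFg_norm, one_mul]
  have e1 : Fg (f - t • k) = 1 - t * Fg k := by
    rw [map_sub, hFgf, map_smul, smul_eq_mul]
  have key : ‖f + t • k‖ ≤ 1 + t * Fg k + 2 * γ * t ^ q := by
    rw [e1] at hFk
    linarith
  have h1 : ‖g‖ • f = g := by rw [hf_def, smul_inv_smul₀ hgn.ne']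
  have h2 : ‖g‖ • (t • k) = u • h := by
    rw [hk_def, smul_smul, smul_smul]
    congr 1
    rw [ht_def]
    field_simp [hgn.ne']
  have hgeq : g + u • h = ‖g‖ • (f + t • k) := by
    rw [smul_add, h1, h2]
  have hgq : ‖g‖ ^ (1 - q) = ‖g‖ / ‖g‖ ^ q := by
    rw [Real.rpow_sub hgn, Real.rpow_one]
  have htq : t ^ q = u ^ q * ‖h‖ ^ q / ‖g‖ ^ q := by
    rw [ht_def, Real.div_rpow (by positivity) hgn.le, Real.mul_rpow hu.le hhn.le]
  have hFkh : Fg k = ‖h‖⁻¹ * Fg h := by rw [hk_def, map_smul, smul_eq_mul]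
  have hgqpos : (0:ℝ) < ‖g‖ ^ q := Real.rpow_pos_of_pos hgn q
  calc ‖g + u • h‖ = ‖g‖ * ‖f + t • k‖ := by
        rw [hgeq, norm_smul, Real.norm_eq_abs, abs_of_pos hgn]
    _ ≤ ‖g‖ * (1 + t * Fg k + 2 * γ * t ^ q) :=
        mul_le_mul_of_nonneg_left key hgn.le
    _ = ‖g‖ + u * Fg h + 2 * γ * u ^ q * ‖g‖ ^ (1 - q) * ‖h‖ ^ q := by
        rw [hgq, htq, hFkh, ht_def]
        field_simp [hgn.ne', hhn.ne', hgqpos.ne']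
end

section
/- Let X be a real Banach space whose modulus of smoothness satisfies ρ(u) ≤ γ u^q for all u > 0, where 1 < q ≤ 2 and γ > 0 is a constant. Let g ∈ X, g ≠ 0, with norming functional F_g, and let φ ∈ X with ‖φ‖ = 1 and F_g(φ) ≠ 0. Set λ := sign(F_g(φ)) · ‖g‖ · (2γq)^{1/(1−q)} · |F_g(φ)|^{1/(q−1)}. Then ‖g − λ φ‖ ≤ ‖g‖ · ( 1 − ((q−1)/q) (2γq)^{1/(1−q)} |F_g(φ)|^{q/(q−1)} ). -/
lemma smoothness_pair_bound {X : Type*} [NormedAddCommGroup X] [NormedSpace ℝ X]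
    (γ q : ℝ)
    (hρ : ∀ u : ℝ, 0 < u → modulusOfSmoothness X u ≤ γ * u ^ q)
    (f ψ : X) (hf : ‖f‖ = 1) (hψ : ‖ψ‖ = 1) (u : ℝ) (hu : 0 < u) :
    ‖f + u • ψ‖ + ‖f - u • ψ‖ ≤ 2 + 2 * (γ * u ^ q) := by
  have hmem : (‖f + u • ψ‖ + ‖f - u • ψ‖) / 2 - 1 ∈
      {x : ℝ | ∃ f g : X, ‖f‖ = 1 ∧ ‖g‖ = 1 ∧ x = (‖f + u • g‖ + ‖f - u • g‖) / 2 - 1} :=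
    ⟨f, ψ, hf, hψ, rfl⟩
  have hbdd : BddAbove {x : ℝ | ∃ f g : X, ‖f‖ = 1 ∧ ‖g‖ = 1 ∧
      x = (‖f + u • g‖ + ‖f - u • g‖) / 2 - 1} := by
    refine ⟨u, fun x hx => ?_⟩
    obtain ⟨f', g', hf', hg', rfl⟩ := hx
    have h1 : ‖f' + u • g'‖ ≤ 1 + u := by
      calc ‖f' + u • g'‖ ≤ ‖f'‖ + ‖u • g'‖ := norm_add_le _ _
        _ = 1 + u := by rw [hf', norm_smul, hg', Real.norm_eq_abs, abs_of_pos hu, mul_one]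
    have h2 : ‖f' - u • g'‖ ≤ 1 + u := by
      calc ‖f' - u • g'‖ ≤ ‖f'‖ + ‖u • g'‖ := norm_sub_le _ _
        _ = 1 + u := by rw [hf', norm_smul, hg', Real.norm_eq_abs, abs_of_pos hu, mul_one]
    linarith
  have h := le_csSup hbdd hmem
  have h2 := hρ u hu
  have : (‖f + u • ψ‖ + ‖f - u • ψ‖) / 2 - 1 ≤ γ * u ^ q := le_trans h h2
  linarith

/-- Let `X` be a real Banach space with `ρ(u) ≤ γ u^q` for all `u > 0`, `1 < q ≤ 2`, `γ > 0`.
Let `g ≠ 0` with norming functional `F_g`, and let `φ` with `‖φ‖ = 1` and `F_g(φ) ≠ 0`.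
With `λ = sign(F_g(φ)) ‖g‖ (2γq)^{1/(1−q)} |F_g(φ)|^{1/(q−1)}`, one has
`‖g − λ φ‖ ≤ ‖g‖ (1 − ((q−1)/q)(2γq)^{1/(1−q)} |F_g(φ)|^{q/(q−1)})`. -/
theorem rpga_banach_step_reduction {X : Type*} [NormedAddCommGroup X]
    [NormedSpace ℝ X] [CompleteSpace X]
    (γ q : ℝ) (hq1 : 1 < q) (hq2 : q ≤ 2) (hγ : 0 < γ)
    (hρ : ∀ u : ℝ, 0 < u → modulusOfSmoothness X u ≤ γ * u ^ q)
    (g : X) (hg : g ≠ 0)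
    (Fg : X →L[ℝ] ℝ) (hFg_norm : ‖Fg‖ = 1) (hFg : Fg g = ‖g‖)
    (φ : X) (hφ : ‖φ‖ = 1) (hFgφ : Fg φ ≠ 0)
    (lam : ℝ)
    (hlam : lam = Real.sign (Fg φ) * ‖g‖ * (2 * γ * q) ^ ((1 : ℝ) / (1 - q)) *
      |Fg φ| ^ ((1 : ℝ) / (q - 1))) :
    ‖g - lam • φ‖ ≤
      ‖g‖ * (1 - (q - 1) / q * (2 * γ * q) ^ ((1 : ℝ) / (1 - q)) *
        |Fg φ| ^ (q / (q - 1))) := by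
  have hng : (0:ℝ) < ‖g‖ := norm_pos_iff.mpr hg
  set ng : ℝ := ‖g‖ with hngdef
  set B : ℝ := |Fg φ| with hBdef
  have hB : 0 < B := abs_pos.mpr hFgφ
  have hc : (0:ℝ) < 2 * γ * q := by positivity
  set A : ℝ := (2 * γ * q) ^ ((1 : ℝ) / (1 - q)) with hAdef
  have hA : 0 < A := Real.rpow_pos_of_pos hc _
  have hq1' : q - 1 ≠ 0 := by linarith
  have hq0 : 0 < q := by linarith
  -- sign facts
  have hsign : Real.sign (Fg φ) = 1 ∨ Real.sign (Fg φ) = -1 := by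
    rcases lt_or_gt_of_ne hFgφ with h | h
    · right; exact Real.sign_of_neg h
    · left; exact Real.sign_of_pos h
  set ψ : X := Real.sign (Fg φ) • φ with hψdef
  have hψ : ‖ψ‖ = 1 := by
    rw [hψdef, norm_smul, Real.norm_eq_abs, hφ, mul_one]
    rcases hsign with h | h <;> rw [h] <;> norm_num
  have hFgψ : Fg ψ = B := by
    rw [hψdef, map_smul, smul_eq_mul, hBdef]
    rcases lt_or_gt_of_ne hFgφ with h | h
    · rw [Real.sign_of_neg h, abs_of_neg h]; ring
    · rw [Real.sign_of_pos h, abs_of_pos h, one_mul]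
  set t : ℝ := ng * A * B ^ ((1 : ℝ) / (q - 1)) with htdef
  have hBp : 0 < B ^ ((1 : ℝ) / (q - 1)) := Real.rpow_pos_of_pos hB _
  have ht : 0 < t := by positivity
  have hlamψ : lam • φ = t • ψ := by
    rw [hψdef, smul_smul, hlam, htdef]; ring_nf
  -- normalized vector
  set f : X := ng⁻¹ • g with hfdef
  have hf : ‖f‖ = 1 := by
    rw [hfdef, norm_smul, Real.norm_eq_abs, abs_of_pos (inv_pos.mpr hng)]
    field_simp
    rfl
  set u : ℝ := t / ng with hudef
  have hu : 0 < u := div_pos ht hng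
  have key := smoothness_pair_bound γ q hρ f ψ hf hψ u hu
  -- scale back
  have hsc1 : ng • (f + u • ψ) = g + t • ψ := by
    rw [hfdef, smul_add, smul_smul, smul_smul, hudef]
    rw [mul_inv_cancel₀ (ne_of_gt hng), one_smul, mul_div_cancel₀ _ (ne_of_gt hng)]
  have hsc2 : ng • (f - u • ψ) = g - t • ψ := by
    rw [hfdef, smul_sub, smul_smul, smul_smul, hudef]
    rw [mul_inv_cancel₀ (ne_of_gt hng), one_smul, mul_div_cancel₀ _ (ne_of_gt hng)]
  have hscaled : ‖g + t • ψ‖ + ‖g - t • ψ‖ ≤ ng * (2 + 2 * (γ * u ^ q)) := by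
    rw [← hsc1, ← hsc2, norm_smul, norm_smul, Real.norm_eq_abs, abs_of_pos hng]
    calc ng * ‖f + u • ψ‖ + ng * ‖f - u • ψ‖ = ng * (‖f + u • ψ‖ + ‖f - u • ψ‖) := by ring
      _ ≤ ng * (2 + 2 * (γ * u ^ q)) := by
          exact mul_le_mul_of_nonneg_left key (le_of_lt hng)
  -- lower bound via norming functional
  have hlow : ng + t * B ≤ ‖g + t • ψ‖ := by
    have h1' := Fg.le_opNorm (g + t • ψ)
    rw [hFg_norm, one_mul, Real.norm_eq_abs] at h1'
    have h1 : Fg (g + t • ψ) ≤ ‖g + t • ψ‖ := le_trans (le_abs_self _) h1'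
    have h2 : Fg (g + t • ψ) = ng + t * B := by
      rw [map_add, map_smul, smul_eq_mul, hFg, hFgψ]
    linarith [h2 ▸ h1]
  have hmain : ‖g - t • ψ‖ ≤ ng + ng * (2 * (γ * u ^ q)) - t * B := by linarith [hscaled, hlow]
  -- now the rpow algebra
  have huval : u = A * B ^ ((1 : ℝ) / (q - 1)) := by
    rw [hudef, htdef]; field_simp
  have hexp : (1 : ℝ) / (q - 1) * q = q / (q - 1) := by field_simp
  have hBq : (B ^ ((1 : ℝ) / (q - 1))) ^ q = B ^ (q / (q - 1)) := by
    rw [← Real.rpow_mul hB.le, hexp]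
  have hAq : 2 * γ * A ^ q = A / q := by
    have h1 : A ^ q = (2 * γ * q) ^ (q / (1 - q)) := by
      rw [hAdef, ← Real.rpow_mul hc.le]
      congr 1
      field_simp
    have h1q : (1:ℝ) - q ≠ 0 := by linarith
    have hsum : 1 + q / (1 - q) = 1 / (1 - q) := by field_simp; ring
    have h2 : (2 * γ * q) * (2 * γ * q) ^ (q / (1 - q)) = (2 * γ * q) ^ ((1:ℝ) / (1 - q)) := by
      rw [← hsum, Real.rpow_one_add' hc.le (by rw [hsum]; exact one_div_ne_zero h1q)]
    have h3 : 2 * γ * (2 * γ * q) ^ (q / (1 - q)) =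
        (2 * γ * q) * (2 * γ * q) ^ (q / (1 - q)) / q := by
      field_simp
    rw [h1, h3, h2, ← hAdef]
  have huq : 2 * (γ * u ^ q) = A / q * B ^ (q / (q - 1)) := by
    rw [huval, Real.mul_rpow hA.le hBp.le, hBq, ← hAq]
    ring
  have htB : t * B = ng * A * B ^ (q / (q - 1)) := by
    rw [htdef]
    have : B ^ ((1:ℝ) / (q - 1)) * B = B ^ (q / (q - 1)) := by
      rw [← Real.rpow_add_one hB.ne']
      congr 1
      field_simp
      ring
    calc ng * A * B ^ ((1:ℝ)/(q-1)) * B = ng * A * (B ^ ((1:ℝ)/(q-1)) * B) := by ring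
      _ = ng * A * B ^ (q / (q - 1)) := by rw [this]
  rw [hlamψ]
  have hfinal : ng + ng * (2 * (γ * u ^ q)) - t * B =
      ng * (1 - (q - 1) / q * A * B ^ (q / (q - 1))) := by
    rw [huq, htB]
    have hqne : q ≠ 0 := ne_of_gt hq0
    field_simp
    ring
  calc ‖g - t • ψ‖ ≤ ng + ng * (2 * (γ * u ^ q)) - t * B := hmain
    _ = ng * (1 - (q - 1) / q * A * B ^ (q / (q - 1))) := hfinal
end
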